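/- For every n ≥ 2, the generalized Motzkin polynomial M_n is not a sum of squares of polynomials: there is no finite family f₁,…,f_k ∈ ℝ[x₁,…,xₙ] with M_n = Σ_{i=1}^k f_i². -/

import Mathlib

open MvPolynomial Finset

noncomputable section

/-- The all-ones exponent vector `e = (1,…,1)`. -/
def eAll (n : ℕ) : Fin n →₀ ℕ := Finsupp.equivFunOnFinite.symm (fun _ => 1)

/-- The exponent vector `2(e + e_j)`. -/
def expMotz (n : ℕ) (j : Fin n) : Fin n →₀ ℕ :=
  Finsupp.equivFunOnFinite.symm (fun i => if i = j then 4 else 2)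

/-- The exponent vector `2e = (2,…,2)`. -/
def twoE (n : ℕ) : Fin n →₀ ℕ := Finsupp.equivFunOnFinite.symm (fun _ => 2)

/-- The generalized Motzkin polynomial
`M_n = 1 + Σ_{j=1}^n x^{2(e+e_j)} − (n+1)·x^{2e}`. -/
def Motzkin (n : ℕ) : MvPolynomial (Fin n) ℝ :=
  1 + (∑ j : Fin n, monomial (expMotz n j) (1 : ℝ)) - monomial (twoE n) ((n : ℝ) + 1)

/-- The signed quadric `N_n = (1 − Σ_{j=1}^n x_j)²`. -/
def SignedQuadric (n : ℕ) : MvPolynomial (Fin n) ℝ :=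
  (1 - ∑ j : Fin n, X j) ^ 2

/-- `f` is a circuit polynomial. -/
def IsCircuit {n : ℕ} (f : MvPolynomial (Fin n) ℝ) : Prop :=
  (∃ (w : Fin n →₀ ℕ) (c : ℝ), 0 ≤ c ∧ f = monomial (2 • w) c) ∨
  (∃ r : ℕ, r ≤ n ∧ ∃ (α : Fin (r + 1) → (Fin n →₀ ℕ)) (c : Fin (r + 1) → ℝ)
      (β : Fin n →₀ ℕ) (fβ : ℝ) (lam : Fin (r + 1) → ℝ),
    (∀ j, 0 < c j) ∧
    (∀ j i, Even (α j i)) ∧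
    AffineIndependent ℝ (fun j => (fun i => (α j i : ℝ))) ∧
    (∀ j, 0 < lam j) ∧ (∑ j, lam j) = 1 ∧
    (∀ i, (β i : ℝ) = ∑ j, lam j * (α j i : ℝ)) ∧
    f = monomial β fβ + ∑ j, monomial (α j) (c j))

/-- `f` is a nonnegative circuit polynomial. -/
def IsNonnegCircuit {n : ℕ} (f : MvPolynomial (Fin n) ℝ) : Prop :=
  IsCircuit f ∧ ∀ x : Fin n → ℝ, 0 ≤ eval x f

/-- The set of sums of nonnegative circuit polynomials. -/
def SONCset (n : ℕ) : Set (MvPolynomial (Fin n) ℝ) :=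
  {f | ∃ (k : ℕ) (μ : Fin k → ℝ) (p : Fin k → MvPolynomial (Fin n) ℝ),
    (∀ i, 0 ≤ μ i) ∧ (∀ i, IsNonnegCircuit (p i)) ∧ f = ∑ i, μ i • p i}

/-- The set of sums of squares. -/
def SOSset (n : ℕ) : Set (MvPolynomial (Fin n) ℝ) :=
  {f | ∃ (k : ℕ) (p : Fin k → MvPolynomial (Fin n) ℝ), f = ∑ i, (p i) ^ 2}

/-- The set of sums of squares of binomials (SDSOS). -/
def SDSOSset (n : ℕ) : Set (MvPolynomial (Fin n) ℝ) :=
  {f | ∃ (k : ℕ) (a b : Fin k → ℝ) (u v : Fin k → (Fin n →₀ ℕ)),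
    f = ∑ i, (monomial (u i) (a i) + monomial (v i) (b i)) ^ 2}

/-- The Sherali-Adams set: nonnegative combinations of `x_I · x̄_J`. -/
def SAset (n : ℕ) : Set (MvPolynomial (Fin n) ℝ) :=
  {f | ∃ α : Finset (Fin n) × Finset (Fin n) → ℝ, (∀ p, 0 ≤ α p) ∧
    f = ∑ p : Finset (Fin n) × Finset (Fin n),
      α p • ((∏ i ∈ p.1, X i) * ∏ j ∈ p.2, (1 - X j))}

/-- The preprime generated by a finite constraint set. -/
def preprime {n : ℕ} (G : Finset (MvPolynomial (Fin n) ℝ)) :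
    Set (MvPolynomial (Fin n) ℝ) :=
  {p | ∃ (k : ℕ) (cc : Fin k → ℝ) (e : Fin k → MvPolynomial (Fin n) ℝ → ℕ),
    (∀ i, 0 ≤ cc i) ∧ p = ∑ i, cc i • ∏ g ∈ G, g ^ (e i g)}

/-- The feasibility set `𝒢₊` of a constraint set. -/
def feasSet {n : ℕ} (G : Finset (MvPolynomial (Fin n) ℝ)) : Set (Fin n → ℝ) :=
  {x | ∀ g ∈ G, 0 ≤ eval x g}

/-- The Boolean hypercube `{0,1}ⁿ ⊆ ℝⁿ`. -/
def Hypercube (n : ℕ) : Set (Fin n → ℝ) := {x | ∀ i, x i = 0 ∨ x i = 1}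

/-- The degree-`D` Putinar-type hierarchy `H(GEN, 𝒢, D)`. -/
def HPut {n : ℕ} (GEN : Set (MvPolynomial (Fin n) ℝ))
    (G : Finset (MvPolynomial (Fin n) ℝ)) (D : ℕ) : Set (MvPolynomial (Fin n) ℝ) :=
  {f | ∃ (k : ℕ) (s g : Fin k → MvPolynomial (Fin n) ℝ),
    (∀ i, s i ∈ GEN) ∧ (∀ i, g i ∈ G) ∧
    (∀ i, (s i * g i).totalDegree ≤ D) ∧ f = ∑ i, s i * g i}

/-- The degree-`D` Schmüdgen-type hierarchy `H*(GEN, 𝒢, D)`. -/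
def HSch {n : ℕ} (GEN : Set (MvPolynomial (Fin n) ℝ))
    (G : Finset (MvPolynomial (Fin n) ℝ)) (D : ℕ) : Set (MvPolynomial (Fin n) ℝ) :=
  {f | ∃ (k : ℕ) (s g : Fin k → MvPolynomial (Fin n) ℝ),
    (∀ i, s i ∈ GEN) ∧ (∀ i, g i ∈ preprime G) ∧
    (∀ i, (s i * g i).totalDegree ≤ D) ∧ f = ∑ i, s i * g i}

/-- `bound(f, GEN, 𝒢, D)` for the Putinar-type hierarchy, valued in `EReal`. -/
def boundPut {n : ℕ} (f : MvPolynomial (Fin n) ℝ) (GEN : Set (MvPolynomial (Fin n) ℝ))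
    (G : Finset (MvPolynomial (Fin n) ℝ)) (D : ℕ) : EReal :=
  sSup {x : EReal | ∃ lam : ℝ, x = (lam : EReal) ∧ f - C lam ∈ HPut GEN G D}

/-- `boundSch(f, GEN, 𝒢, D)` for the Schmüdgen-type hierarchy, valued in `EReal`. -/
def boundSch {n : ℕ} (f : MvPolynomial (Fin n) ℝ) (GEN : Set (MvPolynomial (Fin n) ℝ))
    (G : Finset (MvPolynomial (Fin n) ℝ)) (D : ℕ) : EReal :=
  sSup {x : EReal | ∃ lam : ℝ, x = (lam : EReal) ∧ f - C lam ∈ HSch GEN G D}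

/-- Putinar-type Sherali-Adams hierarchy with the SA degree convention
`deg p_i ≤ ⌊(D − deg g_i)/2⌋`, encoded as `2·deg p_i + deg g_i ≤ D`. -/
def HPutSA {n : ℕ} (G : Finset (MvPolynomial (Fin n) ℝ)) (D : ℕ) :
    Set (MvPolynomial (Fin n) ℝ) :=
  {f | ∃ (k : ℕ) (p g : Fin k → MvPolynomial (Fin n) ℝ),
    (∀ i, p i ∈ SAset n) ∧ (∀ i, g i ∈ G) ∧
    (∀ i, 2 * (p i).totalDegree + (g i).totalDegree ≤ D) ∧ f = ∑ i, p i * g i}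

/-- Schmüdgen-type Sherali-Adams hierarchy with the SA degree convention. -/
def HSchSA {n : ℕ} (G : Finset (MvPolynomial (Fin n) ℝ)) (D : ℕ) :
    Set (MvPolynomial (Fin n) ℝ) :=
  {f | ∃ (k : ℕ) (p g : Fin k → MvPolynomial (Fin n) ℝ),
    (∀ i, p i ∈ SAset n) ∧ (∀ i, g i ∈ preprime G) ∧
    (∀ i, 2 * (p i).totalDegree + (g i).totalDegree ≤ D) ∧ f = ∑ i, p i * g i}

/-- `bound(f, 𝕊𝔸, 𝒢, D)`. -/
def boundPutSA {n : ℕ} (f : MvPolynomial (Fin n) ℝ)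
    (G : Finset (MvPolynomial (Fin n) ℝ)) (D : ℕ) : EReal :=
  sSup {x : EReal | ∃ lam : ℝ, x = (lam : EReal) ∧ f - C lam ∈ HPutSA G D}

/-- `boundSch(f, 𝕊𝔸, 𝒢, D)`. -/
def boundSchSA {n : ℕ} (f : MvPolynomial (Fin n) ℝ)
    (G : Finset (MvPolynomial (Fin n) ℝ)) (D : ℕ) : EReal :=
  sSup {x : EReal | ∃ lam : ℝ, x = (lam : EReal) ∧ f - C lam ∈ HSchSA G D}

end

namespace MotzkinNotSOSAux

open Polynomial

lemma sq_sum_zero_real {k : ℕ} (v : Fin k → ℝ) (h : ∑ i, v i ^ 2 = 0) : ∀ i, v i = 0 := by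
  intro i
  have := (Finset.sum_eq_zero_iff_of_nonneg (fun j _ => sq_nonneg (v j))).mp h i (Finset.mem_univ i)
  exact pow_eq_zero_iff (by norm_num) |>.mp this

lemma sq_sum_zero_polyreal {k : ℕ} (q : Fin k → Polynomial ℝ) (h : ∑ i, q i ^ 2 = 0) :
    ∀ i, q i = 0 := by
  intro i
  apply Polynomial.funext
  intro x
  simp only [Polynomial.eval_zero]
  apply sq_sum_zero_real (fun j => (q j).eval x)
  have := congrArg (Polynomial.eval x) h
  simpa [Polynomial.eval_finset_sum] using this

lemma sos_natDegree_le {R : Type*} [CommRing R] {k : ℕ} (g : Fin k → Polynomial R)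
    (hz : ∀ v : Fin k → R, ∑ i, v i ^ 2 = 0 → ∀ i, v i = 0)
    {D : ℕ} (h : (∑ i, g i ^ 2).natDegree ≤ D) : ∀ i, 2 * (g i).natDegree ≤ D := by
  intro i
  by_contra hlt
  push_neg at hlt
  set d := Finset.univ.sup (fun j => (g j).natDegree) with hd
  have hdi : (g i).natDegree ≤ d := Finset.le_sup (f := fun j => (g j).natDegree) (Finset.mem_univ i)
  have hDd : D < 2 * d := lt_of_lt_of_le hlt (by omega)
  have hc0 : (∑ j, g j ^ 2).coeff (2 * d) = 0 :=
    Polynomial.coeff_eq_zero_of_natDegree_lt (lt_of_le_of_lt h hDd)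
  have hsq : ∀ j : Fin k, (g j ^ 2).coeff (2 * d) = ((g j).coeff d) ^ 2 := by
    intro j
    rw [sq, Polynomial.coeff_mul]
    rw [Finset.sum_eq_single (d, d)]
    · rw [sq]
    · rintro ⟨a, b⟩ hab hne
      rw [Finset.HasAntidiagonal.mem_antidiagonal] at hab
      have : d < a ∨ d < b := by
        by_contra hcon
        push_neg at hcon
        exact hne (by simp only [Prod.mk.injEq]; omega)
      rcases this with h' | h'
      · rw [Polynomial.coeff_eq_zero_of_natDegree_lt
          (lt_of_le_of_lt (Finset.le_sup (f := fun j => (g j).natDegree) (Finset.mem_univ j)) h'), zero_mul]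
      · rw [Polynomial.coeff_eq_zero_of_natDegree_lt
          (lt_of_le_of_lt (Finset.le_sup (f := fun j => (g j).natDegree) (Finset.mem_univ j)) h'), mul_zero]
    · intro hnm
      exact absurd (Finset.HasAntidiagonal.mem_antidiagonal.mpr (two_mul d).symm) hnm
  have hzsum : ∑ j, ((g j).coeff d) ^ 2 = 0 := by
    rw [← hc0, Polynomial.finset_sum_coeff]
    exact Finset.sum_congr rfl fun j _ => (hsq j).symm
  have hall := hz _ hzsum
  have hnonempty : (Finset.univ : Finset (Fin k)).Nonempty := ⟨i, Finset.mem_univ i⟩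
  obtain ⟨j, _, hj⟩ := Finset.exists_mem_eq_sup Finset.univ hnonempty (fun j => (g j).natDegree)
  have hjd : (g j).natDegree = d := hj.symm
  have hgj : g j ≠ 0 := by
    intro h0
    rw [h0] at hjd
    simp at hjd
    omega
  have : (g j).coeff d = 0 := hall j
  rw [← hjd] at this
  exact hgj (Polynomial.leadingCoeff_eq_zero.mp this)

lemma coeff_sq_four {R : Type*} [CommRing R] (g : Polynomial R) (hdeg : g.natDegree ≤ 2) :
    (g ^ 2).coeff 4 = (g.coeff 2) ^ 2 := by
  have h3 : g.coeff 3 = 0 := Polynomial.coeff_eq_zero_of_natDegree_lt (by omega)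
  have h4 : g.coeff 4 = 0 := Polynomial.coeff_eq_zero_of_natDegree_lt (by omega)
  rw [sq, Polynomial.coeff_mul, Finset.Nat.sum_antidiagonal_eq_sum_range_succ_mk]
  simp [Finset.sum_range_succ, h3, h4, sq]

lemma coeff_sq_two {R : Type*} [CommRing R] (g : Polynomial R) :
    (g ^ 2).coeff 2 = 2 * (g.coeff 2 * g.coeff 0) + (g.coeff 1) ^ 2 := by
  rw [sq, Polynomial.coeff_mul, Finset.Nat.sum_antidiagonal_eq_sum_range_succ_mk]
  simp [Finset.sum_range_succ, sq]
  ring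

lemma coeff_sq_zero {R : Type*} [CommRing R] (g : Polynomial R) :
    (g ^ 2).coeff 0 = (g.coeff 0) ^ 2 := by
  rw [sq, Polynomial.mul_coeff_zero, sq]

end MotzkinNotSOSAux

set_option maxHeartbeats 1000000


/-- For every `n ≥ 2`, the generalized Motzkin polynomial `M_n` is not
a sum of squares of polynomials. -/
theorem motzkin_not_sos (n : ℕ) (hn : 2 ≤ n) :
    ¬ ∃ (k : ℕ) (f : Fin k → MvPolynomial (Fin n) ℝ),
      Motzkin n = ∑ i : Fin k, (f i) ^ 2 := by
  classical
  open Polynomial MotzkinNotSOSAux in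
  rintro ⟨k, f, hf⟩
  set i₀ : Fin n := ⟨0, by omega⟩ with hi₀
  set i₁ : Fin n := ⟨1, by omega⟩ with hi₁
  have hne : i₀ ≠ i₁ := by simp [hi₀, hi₁, Fin.ext_iff]
  set g : Fin n → Polynomial (Polynomial ℝ) :=
    fun j => if j = i₀ then Polynomial.C Polynomial.X else if j = i₁ then Polynomial.X else 1 with hg
  have hmono : ∀ (s : Fin n →₀ ℕ) (c : ℝ),
      MvPolynomial.aeval g (monomial s c)
        = Polynomial.C (Polynomial.C c * Polynomial.X ^ (s i₀)) * Polynomial.X ^ (s i₁) := by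
    intro s c
    rw [MvPolynomial.aeval_monomial]
    have h1 : s.prod (fun i k => g i ^ k) = ∏ i : Fin n, g i ^ s i :=
      Finsupp.prod_fintype _ _ (fun i => pow_zero _)
    have h2 : ∏ i : Fin n, g i ^ s i = g i₀ ^ s i₀ * g i₁ ^ s i₁ := by
      rw [← Finset.prod_subset (Finset.subset_univ ({i₀, i₁} : Finset (Fin n)))
        (fun x _ hx => by
          simp only [Finset.mem_insert, Finset.mem_singleton, not_or] at hx
          simp [hg, hx.1, hx.2])]
      rw [Finset.prod_pair hne]
    rw [h1, h2]
    have hg0 : g i₀ = Polynomial.C Polynomial.X := by simp [hg]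
    have hg1 : g i₁ = Polynomial.X := by simp [hg, hne.symm]
    rw [hg0, hg1]
    have : (algebraMap ℝ (Polynomial (Polynomial ℝ))) c = Polynomial.C (Polynomial.C c) := rfl
    rw [this, ← Polynomial.C_pow, Polynomial.C_mul]
    ring
  have hM : MvPolynomial.aeval g (Motzkin n) =
      1 + (Polynomial.C (Polynomial.X ^ 4) * Polynomial.X ^ 2
        + Polynomial.C (Polynomial.X ^ 2) * Polynomial.X ^ 4
        + Polynomial.C (Polynomial.C ((n : ℝ) - 2) * Polynomial.X ^ 2) * Polynomial.X ^ 2)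
      - Polynomial.C (Polynomial.C ((n : ℝ) + 1) * Polynomial.X ^ 2) * Polynomial.X ^ 2 := by
    rw [Motzkin, map_sub, map_add, map_one, map_sum]
    congr 1
    congr 1
    · have hterm : ∀ j : Fin n, MvPolynomial.aeval g (monomial (expMotz n j) (1:ℝ))
          = Polynomial.C (Polynomial.X ^ (if i₀ = j then 4 else 2))
            * Polynomial.X ^ (if i₁ = j then 4 else 2) := by
        intro j
        rw [hmono]
        have e0 : (expMotz n j) i₀ = if i₀ = j then 4 else 2 := by
          simp [expMotz]
        have e1 : (expMotz n j) i₁ = if i₁ = j then 4 else 2 := by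
          simp [expMotz]
        rw [e0, e1, map_one, one_mul]
      calc ∑ j : Fin n, MvPolynomial.aeval g (monomial (expMotz n j) (1:ℝ))
          = ∑ j ∈ (Finset.univ \ {i₀, i₁}), MvPolynomial.aeval g (monomial (expMotz n j) (1:ℝ))
            + ∑ j ∈ ({i₀, i₁} : Finset (Fin n)), MvPolynomial.aeval g (monomial (expMotz n j) (1:ℝ)) := by
            rw [Finset.sum_sdiff (Finset.subset_univ _)]
        _ = _ := by
            rw [Finset.sum_pair hne, hterm, hterm]
            have hrest : ∑ j ∈ (Finset.univ \ {i₀, i₁}), MvPolynomial.aeval g (monomial (expMotz n j) (1:ℝ))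
                = Polynomial.C (Polynomial.C ((n : ℝ) - 2) * Polynomial.X ^ 2) * Polynomial.X ^ 2 := by
              rw [Finset.sum_congr rfl (fun j hj => by
                simp only [Finset.mem_sdiff, Finset.mem_insert, Finset.mem_singleton, not_or] at hj
                rw [hterm j, if_neg (fun h => hj.2.1 h.symm), if_neg (fun h => hj.2.2 h.symm)])]
              rw [Finset.sum_const, Finset.card_sdiff_of_subset (Finset.subset_univ _),
                Finset.card_univ, Fintype.card_fin, Finset.card_pair hne, nsmul_eq_mul]
              have hcastC : ((n - 2 : ℕ) : Polynomial (Polynomial ℝ))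
                  = Polynomial.C (Polynomial.C ((n : ℝ) - 2)) := by
                have h1 : ((n : ℝ) - 2) = ((n - 2 : ℕ) : ℝ) := by
                  rw [Nat.cast_sub hn]; norm_num
                rw [h1]
                exact (map_natCast ((Polynomial.C : Polynomial ℝ →+* Polynomial (Polynomial ℝ)).comp
                  (Polynomial.C : ℝ →+* Polynomial ℝ)) (n - 2)).symm
              rw [hcastC, map_mul]
              ring
            rw [hrest]
            simp [hne, hne.symm]
            ring
    · rw [hmono]
      have h2' : ∀ i, (twoE n) i = 2 := by intro i; simp [twoE]
      rw [h2', h2']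
  -- transfer the SOS identity
  set G : Fin k → Polynomial (Polynomial ℝ) := fun i => MvPolynomial.aeval g (f i) with hG
  have hN : (1 + (Polynomial.C (Polynomial.X ^ 4) * Polynomial.X ^ 2
        + Polynomial.C (Polynomial.X ^ 2) * Polynomial.X ^ 4
        + Polynomial.C (Polynomial.C ((n : ℝ) - 2) * Polynomial.X ^ 2) * Polynomial.X ^ 2)
      - Polynomial.C (Polynomial.C ((n : ℝ) + 1) * Polynomial.X ^ 2) * Polynomial.X ^ 2 :
        Polynomial (Polynomial ℝ)) = ∑ i, G i ^ 2 := by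
    rw [← hM, hf, map_sum]
    simp [hG]
  -- degree bound
  have hdegN : ((∑ i, G i ^ 2)).natDegree ≤ 4 := by
    rw [← hN]
    apply le_trans (Polynomial.natDegree_sub_le _ _)
    simp only [max_le_iff]
    constructor
    · apply le_trans (Polynomial.natDegree_add_le _ _)
      simp only [max_le_iff]
      refine ⟨by simp, ?_⟩
      apply le_trans (Polynomial.natDegree_add_le _ _)
      simp only [max_le_iff]
      constructor
      · apply le_trans (Polynomial.natDegree_add_le _ _)
        simp only [max_le_iff]
        constructor
        · apply le_trans (Polynomial.natDegree_C_mul_le _ _)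
          simp [Polynomial.natDegree_X_pow]
        · apply le_trans (Polynomial.natDegree_C_mul_le _ _)
          simp [Polynomial.natDegree_X_pow]
      · apply le_trans (Polynomial.natDegree_C_mul_le _ _)
        simp [Polynomial.natDegree_X_pow]
    · apply le_trans (Polynomial.natDegree_C_mul_le _ _)
      simp [Polynomial.natDegree_X_pow]
  have hdeg : ∀ i, (G i).natDegree ≤ 2 := by
    intro i
    have := sos_natDegree_le G (fun v hv => sq_sum_zero_polyreal v hv) hdegN i
    omega
  set a : Fin k → Polynomial ℝ := fun i => (G i).coeff 2 with ha
  set b : Fin k → Polynomial ℝ := fun i => (G i).coeff 1 with hb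
  set c : Fin k → Polynomial ℝ := fun i => (G i).coeff 0 with hc
  -- coefficient identities
  have h4 : ∑ i, (a i) ^ 2 = Polynomial.X ^ 2 := by
    have hco := congrArg (fun p => Polynomial.coeff p 4) hN
    simp only [Polynomial.finset_sum_coeff] at hco
    rw [Finset.sum_congr rfl (fun i _ => coeff_sq_four (G i) (hdeg i))] at hco
    rw [← hco]
    simp only [Polynomial.coeff_add, Polynomial.coeff_sub, Polynomial.coeff_one,
      Polynomial.coeff_C_mul, Polynomial.coeff_X_pow]
    norm_num
  have h0 : ∑ i, (c i) ^ 2 = 1 := by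
    have := congrArg (fun p => Polynomial.coeff p 0) hN
    simp only [Polynomial.finset_sum_coeff] at this
    rw [Finset.sum_congr rfl (fun i _ => coeff_sq_zero (G i))] at this
    rw [← this]
    simp only [Polynomial.coeff_add, Polynomial.coeff_sub, Polynomial.coeff_one,
      Polynomial.coeff_C_mul, Polynomial.coeff_X_pow]
    norm_num
  have h2 : ∑ i, (2 * (a i * c i) + (b i) ^ 2)
      = Polynomial.X ^ 4 + Polynomial.C ((n : ℝ) - 2) * Polynomial.X ^ 2
        - Polynomial.C ((n : ℝ) + 1) * Polynomial.X ^ 2 := by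
    have := congrArg (fun p => Polynomial.coeff p 2) hN
    simp only [Polynomial.finset_sum_coeff] at this
    rw [Finset.sum_congr rfl (fun i _ => coeff_sq_two (G i))] at this
    rw [← this]
    simp only [Polynomial.coeff_add, Polynomial.coeff_sub, Polynomial.coeff_one,
      Polynomial.coeff_C_mul, Polynomial.coeff_X_pow]
    norm_num
  -- c i are constants
  have hcdeg : ∀ i, (c i).natDegree = 0 := by
    intro i
    have := sos_natDegree_le c (fun v hv => sq_sum_zero_real v hv)
      (D := 0) (by rw [h0]; simp) i
    omega
  have hcsym : ∀ i, (c i).eval (-1) = (c i).eval 1 := by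
    intro i
    obtain ⟨γ, hγ⟩ := Polynomial.natDegree_eq_zero.mp (hcdeg i)
    rw [← hγ]
    simp
  -- a i vanish at 0 and are odd of degree ≤ 1
  have hadeg : ∀ i, (a i).natDegree ≤ 1 := by
    intro i
    have := sos_natDegree_le a (fun v hv => sq_sum_zero_real v hv)
      (D := 2) (by rw [h4]; simp [Polynomial.natDegree_X_pow]) i
    omega
  have ha0 : ∀ i, (a i).eval 0 = 0 := by
    apply sq_sum_zero_real
    have := congrArg (Polynomial.eval 0) h4
    simpa [Polynomial.eval_finset_sum] using this
  have hasym : ∀ i, (a i).eval (-1) = -((a i).eval 1) := by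
    intro i
    have hrep := Polynomial.eq_X_add_C_of_natDegree_le_one (hadeg i)
    have h00 : (a i).coeff 0 = 0 := by
      have := ha0 i
      rw [hrep] at this
      simpa using this
    rw [hrep, h00]
    simp
  -- evaluate the middle identity at 1 and -1
  have heval : ∀ (x : ℝ), x ^ 4 + ((n : ℝ) - 2) * x ^ 2 - ((n : ℝ) + 1) * x ^ 2
      = ∑ i, (2 * ((a i).eval x * (c i).eval x) + ((b i).eval x) ^ 2) := by
    intro x
    have := congrArg (Polynomial.eval x) h2
    rw [Polynomial.eval_finset_sum] at this
    simp only [Polynomial.eval_add, Polynomial.eval_sub, Polynomial.eval_mul,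
      Polynomial.eval_pow, Polynomial.eval_X, Polynomial.eval_C,
      Polynomial.eval_ofNat, Polynomial.eval_one] at this
    rw [← this]
  have e1 := heval 1
  have e2 := heval (-1)
  simp only [one_pow, neg_one_sq] at e1 e2
  have hx4 : ((-1 : ℝ)) ^ 4 = 1 := by norm_num
  rw [hx4] at e2
  -- sum the two evaluations
  have hsplit1 : ∑ i, (2 * ((a i).eval 1 * (c i).eval 1) + ((b i).eval 1) ^ 2)
      = ∑ i, 2 * ((a i).eval 1 * (c i).eval 1) + ∑ i, ((b i).eval 1) ^ 2 :=
    Finset.sum_add_distrib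
  have hsplit2 : ∑ i, (2 * ((a i).eval (-1) * (c i).eval (-1)) + ((b i).eval (-1)) ^ 2)
      = ∑ i, 2 * ((a i).eval (-1) * (c i).eval (-1)) + ∑ i, ((b i).eval (-1)) ^ 2 :=
    Finset.sum_add_distrib
  have hcross : ∑ i, 2 * ((a i).eval (-1) * (c i).eval (-1))
      = - ∑ i, 2 * ((a i).eval 1 * (c i).eval 1) := by
    rw [← Finset.sum_neg_distrib]
    exact Finset.sum_congr rfl (fun i _ => by rw [hasym i, hcsym i]; ring)
  have hb1 : (0:ℝ) ≤ ∑ i, ((b i).eval 1) ^ 2 :=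
    Finset.sum_nonneg (fun i _ => sq_nonneg _)
  have hb2 : (0:ℝ) ≤ ∑ i, ((b i).eval (-1)) ^ 2 :=
    Finset.sum_nonneg (fun i _ => sq_nonneg _)
  rw [hsplit1] at e1
  rw [hsplit2, hcross] at e2
  nlinarith [e1, e2, hb1, hb2]
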